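/- Let h(ζ) = exp(-(-ζ)^{2/3}) for ζ in the half-plane type region G = {ζ ∈ ℂ : Re ζ - |Im ζ| < 0}, where w^{2/3} denotes the principal branch on ℂ minus the negative real axis. Then h is holomorphic on G, |h(ζ)| < 1 for ζ ∈ G, |h(ζ)| ≤ 1 for ζ in the closure of G with ζ ≠ 0, and h(ζ) → 1 as ζ → 0 in the closure of G. -/

import Mathlib

open Complex MeasureTheory Metric Set Finset

/-- Wirtinger derivative ∂f/∂z_j at z. -/
noncomputable def wd {n : ℕ} (f : (Fin n → ℂ) → ℂ) (j : Fin n) (z : Fin n → ℂ) : ℂ :=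
  (fderiv ℝ f z (Pi.single j 1) - Complex.I * fderiv ℝ f z (Pi.single j Complex.I)) / 2

/-- Conjugate Wirtinger derivative ∂f/∂z̄_j at z. -/
noncomputable def wdb {n : ℕ} (f : (Fin n → ℂ) → ℂ) (j : Fin n) (z : Fin n → ℂ) : ℂ :=
  (fderiv ℝ f z (Pi.single j 1) + Complex.I * fderiv ℝ f z (Pi.single j Complex.I)) / 2

/-- Complex Hessian (Levi form) L_f(z, X) = Σ_{j,k} ∂²f/∂z_j∂z̄_k (z) X_j conj(X_k). -/
noncomputable def levi {n : ℕ} (f : (Fin n → ℂ) → ℂ) (z X : Fin n → ℂ) : ℂ :=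
  ∑ j, ∑ k, wd (fun w => wdb f k w) j z * X j * (starRingEnd ℂ) (X k)

/-- Plurisubharmonicity on Ω via the sub-mean value inequality on complex discs,
for real-valued (usc) functions. -/
def PSubhOn {n : ℕ} (v : (Fin n → ℂ) → ℝ) (Ω : Set (Fin n → ℂ)) : Prop :=
  UpperSemicontinuousOn v Ω ∧
  ∀ z ∈ Ω, ∀ w : Fin n → ℂ, ∀ r : ℝ, 0 < r →
    (∀ ζ : ℂ, ‖ζ‖ ≤ r → z + ζ • w ∈ Ω) →
    v z ≤ (2 * Real.pi)⁻¹ * ∫ t in (0:ℝ)..(2 * Real.pi),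
      v (z + (((r : ℂ) * Complex.exp (t * Complex.I))) • w)

/-- `log u` is plurisubharmonic (for u ≥ 0, possibly vanishing), expressed via the
classical characterization: u·|exp ℓ| is plurisubharmonic for every ℂ-linear ℓ. -/
def LogPSHOn {n : ℕ} (u : (Fin n → ℂ) → ℝ) (Ω : Set (Fin n → ℂ)) : Prop :=
  ∀ ℓ : (Fin n → ℂ) →L[ℂ] ℂ, PSubhOn (fun z => u z * ‖Complex.exp (ℓ z)‖) Ω

/-- The Kobayashi metric F^K_Ω(z, X) = inf {1/λ : f ∈ H(𝔻, Ω), f 0 = z, f' 0 = λ X, λ > 0}. -/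
noncomputable def kob {n : ℕ} (Ω : Set (Fin n → ℂ)) (z X : Fin n → ℂ) : ℝ :=
  sInf { r : ℝ | ∃ f : ℂ → (Fin n → ℂ), DifferentiableOn ℂ f (ball (0:ℂ) 1) ∧
    (∀ ζ ∈ ball (0:ℂ) 1, f ζ ∈ Ω) ∧ f 0 = z ∧
    ∃ l : ℝ, 0 < l ∧ deriv f 0 = (l : ℂ) • X ∧ r = 1 / l }

/-- The Sibony metric F^S_Ω(z, X) = sup {(L_u(z,X))^{1/2} : u ∈ S_z(Ω)}. -/
noncomputable def sibony {n : ℕ} (Ω : Set (Fin n → ℂ)) (z X : Fin n → ℂ) : ℝ :=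
  sSup { s : ℝ | ∃ u : (Fin n → ℂ) → ℝ, ContDiffAt ℝ 2 u z ∧
    (∀ w ∈ Ω, u w ∈ Icc (0:ℝ) 1) ∧ u z = 0 ∧ LogPSHOn u Ω ∧
    s = Real.sqrt ((levi (fun w => (u w : ℂ)) z X).re) }


lemma cos23_aux {θ : ℝ} (h1 : |θ| ≤ Real.pi) :
    (0 ≤ Real.cos θ + |Real.sin θ| → 0 ≤ Real.cos (2 * θ / 3)) ∧
    (0 < Real.cos θ + |Real.sin θ| → 0 < Real.cos (2 * θ / 3)) := by
  have hπ := Real.pi_pos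
  obtain ⟨φ, hφdef⟩ : ∃ φ, φ = |θ| := ⟨_, rfl⟩
  have hφ0 : 0 ≤ φ := hφdef ▸ abs_nonneg θ
  have hφπ : φ ≤ Real.pi := hφdef ▸ h1
  have hcos : Real.cos φ = Real.cos θ := hφdef ▸ Real.cos_abs θ
  have hθlb : -Real.pi ≤ θ := by
    have := neg_abs_le θ; linarith [hφdef ▸ hφπ]
  have hθub : θ ≤ Real.pi := le_trans (le_abs_self θ) h1
  have hsin : Real.sin φ = |Real.sin θ| := by
    rcases le_or_gt 0 θ with h | h
    · rw [hφdef, _root_.abs_of_nonneg h,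
        _root_.abs_of_nonneg (Real.sin_nonneg_of_nonneg_of_le_pi h hθub)]
    · rw [hφdef, abs_of_neg h, Real.sin_neg, _root_.abs_of_nonpos
        (Real.sin_nonpos_of_nonpos_of_neg_pi_le h.le hθlb)]
  have hgoal : Real.cos (2 * θ / 3) = Real.cos (2 * φ / 3) := by
    rw [← Real.cos_abs (2 * θ / 3), abs_div, abs_mul, ← hφdef]
    norm_num
  have h2 : Real.sqrt 2 * Real.sqrt 2 = 2 := Real.mul_self_sqrt (by norm_num)
  have hid : Real.cos φ + Real.sin φ = Real.sqrt 2 * Real.sin (φ + Real.pi / 4) := by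
    rw [Real.sin_add, Real.cos_pi_div_four, Real.sin_pi_div_four]
    linear_combination (-(Real.sin φ + Real.cos φ) / 2) * h2
  constructor
  · intro hge
    have hkey : φ ≤ 3 * Real.pi / 4 := by
      by_contra hlt
      push_neg at hlt
      have hs : 0 < Real.sin (φ - 3 * Real.pi / 4) :=
        Real.sin_pos_of_pos_of_lt_pi (by linarith) (by linarith)
      have heq : Real.sin (φ + Real.pi / 4) = -Real.sin (φ - 3 * Real.pi / 4) := by
        have h : φ + Real.pi / 4 = (φ - 3 * Real.pi / 4) + Real.pi := by ring
        rw [h, Real.sin_add_pi]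
      have hsq := Real.sqrt_pos.mpr (show (0:ℝ) < 2 by norm_num)
      nlinarith [hid, hcos, hsin]
    rw [hgoal]
    exact Real.cos_nonneg_of_mem_Icc ⟨by linarith, by linarith⟩
  · intro hgt
    have hkey : φ < 3 * Real.pi / 4 := by
      by_contra hlt
      push_neg at hlt
      have hs : 0 ≤ Real.sin (φ - 3 * Real.pi / 4) :=
        Real.sin_nonneg_of_nonneg_of_le_pi (by linarith) (by linarith)
      have heq : Real.sin (φ + Real.pi / 4) = -Real.sin (φ - 3 * Real.pi / 4) := by
        have h : φ + Real.pi / 4 = (φ - 3 * Real.pi / 4) + Real.pi := by ring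
        rw [h, Real.sin_add_pi]
      have hsq := Real.sqrt_pos.mpr (show (0:ℝ) < 2 by norm_num)
      nlinarith [hid, hcos, hsin]
    rw [hgoal]
    exact Real.cos_pos_of_mem_Ioo ⟨by linarith, by linarith⟩

lemma im_log_mul : ∀ z : ℂ, (Complex.log z * ((2:ℂ)/3)).im = 2 * z.arg / 3 := by
  intro z
  have h : ((2:ℂ)/3) = ((2/3 : ℝ) : ℂ) := by norm_num
  rw [h, Complex.mul_im, Complex.ofReal_re, Complex.ofReal_im, Complex.log_im]
  ring

lemma re_cpow_aux {z : ℂ} (hz : z ≠ 0) :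
    (-|z.im| ≤ z.re → 0 ≤ (z ^ ((2:ℂ)/3)).re) ∧
    (-|z.im| < z.re → 0 < (z ^ ((2:ℂ)/3)).re) := by
  have habs : 0 < ‖z‖ := norm_pos_iff.mpr hz
  have hform : Real.cos z.arg + |Real.sin z.arg| = (z.re + |z.im|) / ‖z‖ := by
    rw [Complex.cos_arg hz, Complex.sin_arg, abs_div,
      _root_.abs_of_nonneg (norm_nonneg z), ← add_div]
  rw [Complex.cpow_def_of_ne_zero hz, Complex.exp_re, im_log_mul]
  obtain ⟨hn, hp⟩ := cos23_aux (Complex.abs_arg_le_pi z)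
  constructor
  · intro h
    refine mul_nonneg (Real.exp_pos _).le (hn ?_)
    rw [hform]
    exact div_nonneg (by linarith) habs.le
  · intro h
    refine mul_pos (Real.exp_pos _) (hp ?_)
    rw [hform]
    exact div_pos (by linarith) habs

theorem weak_peak_function :
    DifferentiableOn ℂ (fun ζ : ℂ => Complex.exp (-((-ζ) ^ ((2:ℂ)/3))))
      {ζ : ℂ | ζ.re - |ζ.im| < 0} ∧
    (∀ ζ ∈ {ζ : ℂ | ζ.re - |ζ.im| < 0},
      ‖Complex.exp (-((-ζ) ^ ((2:ℂ)/3)))‖ < 1) ∧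
    (∀ ζ ∈ closure {ζ : ℂ | ζ.re - |ζ.im| < 0}, ζ ≠ 0 →
      ‖Complex.exp (-((-ζ) ^ ((2:ℂ)/3)))‖ ≤ 1) ∧
    Filter.Tendsto (fun ζ : ℂ => Complex.exp (-((-ζ) ^ ((2:ℂ)/3))))
      (nhdsWithin 0 (closure {ζ : ℂ | ζ.re - |ζ.im| < 0})) (nhds 1) := by
  have hclosure : ∀ ζ ∈ closure {ζ : ℂ | ζ.re - |ζ.im| < 0}, ζ.re - |ζ.im| ≤ 0 := by
    intro ζ hζ
    have hcl : IsClosed {ζ : ℂ | ζ.re - |ζ.im| ≤ 0} := by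
      have : Continuous fun ζ : ℂ => ζ.re - |ζ.im| :=
        Complex.continuous_re.sub (continuous_abs.comp Complex.continuous_im)
      exact isClosed_le this continuous_const
    have hsub : {ζ : ℂ | ζ.re - |ζ.im| < 0} ⊆ {ζ : ℂ | ζ.re - |ζ.im| ≤ 0} :=
      fun x (hx : x.re - |x.im| < 0) => le_of_lt hx
    exact closure_minimal hsub hcl hζ
  refine ⟨?_, ?_, ?_, ?_⟩
  · -- Differentiability
    intro ζ hζ
    simp only [mem_setOf_eq] at hζ
    have hslit : -ζ ∈ Complex.slitPlane := by
      rcases eq_or_ne ζ.im 0 with h | h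
      · left
        simp only [Complex.neg_re]
        rw [h] at hζ; simp at hζ; linarith
      · right; simpa using h
    exact (((differentiableAt_id.neg.cpow (differentiableAt_const _) hslit).neg).cexp).differentiableWithinAt
  · -- strict bound on G
    intro ζ hζ
    simp only [mem_setOf_eq] at hζ
    have hz : (-ζ : ℂ) ≠ 0 := by
      intro h
      rw [neg_eq_zero] at h
      rw [h] at hζ; simp at hζ
    have hre : 0 < ((-ζ) ^ ((2:ℂ)/3)).re := by
      refine (re_cpow_aux hz).2 ?_
      simp only [Complex.neg_re, Complex.neg_im, abs_neg]
      linarith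
    rw [Complex.norm_exp, Real.exp_lt_one_iff, Complex.neg_re]
    linarith
  · -- weak bound on closure
    intro ζ hζ hne
    have hle := hclosure ζ hζ
    have hz : (-ζ : ℂ) ≠ 0 := neg_ne_zero.mpr hne
    have hre : 0 ≤ ((-ζ) ^ ((2:ℂ)/3)).re := by
      refine (re_cpow_aux hz).1 ?_
      simp only [Complex.neg_re, Complex.neg_im, abs_neg]
      linarith
    rw [Complex.norm_exp, Real.exp_le_one_iff, Complex.neg_re]
    linarith
  · -- limit
    have h0 : Filter.Tendsto (fun ζ : ℂ => -((-ζ) ^ ((2:ℂ)/3)))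
        (nhdsWithin 0 (closure {ζ : ℂ | ζ.re - |ζ.im| < 0})) (nhds 0) := by
      apply squeeze_zero_norm (a := fun ζ : ℂ => ‖ζ‖ ^ ((2:ℝ)/3))
      · intro ζ
        rcases eq_or_ne ζ 0 with rfl | hne
        · simp [Complex.zero_cpow (show ((2:ℂ)/3) ≠ 0 by norm_num), Real.zero_rpow]
        · have := Complex.norm_cpow_le (-ζ) ((2:ℂ)/3)
          have h23 : ((2:ℂ)/3).re = (2:ℝ)/3 := by norm_num [Complex.div_re]
          have h23i : ((2:ℂ)/3).im = 0 := by norm_num [Complex.div_im]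
          rw [h23, h23i, mul_zero, Real.exp_zero, div_one, norm_neg] at this
          simpa using this
      · have hc : ContinuousAt (fun x : ℝ => x ^ ((2:ℝ)/3)) 0 :=
          Real.continuousAt_rpow_const 0 _ (Or.inr (by norm_num))
        have habs : Filter.Tendsto (fun ζ : ℂ => ‖ζ‖)
            (nhdsWithin 0 (closure {ζ : ℂ | ζ.re - |ζ.im| < 0})) (nhds 0) := by
          have := (continuous_norm.tendsto 0).mono_left
            (nhdsWithin_le_nhds (s := closure {ζ : ℂ | ζ.re - |ζ.im| < 0}))
          simpa using this
        have := hc.tendsto.comp habs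
        simpa [Function.comp_def, Real.zero_rpow (show ((2:ℝ)/3) ≠ 0 by norm_num)] using this
    have := (Complex.continuous_exp.tendsto 0).comp h0
    simpa [Function.comp_def] using this
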